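/- Let A be a 3×3 real positive semi-definite matrix with non-negative entries. Then there exists ρ ∈ [0, 1] such that for every α ≥ 0, the matrix A^{∘α} := [a_ij^α] is positive semi-definite if and only if α = 0 or α ≥ ρ; that is, S_A = {0} ∪ [ρ, ∞). -/

import Mathlib

/-- The `α`th Hadamard (entrywise) power of a real matrix, using the real power
function `Real.rpow` (so that `0 ^ 0 = 1`). -/
noncomputable def hadamardPower {n : ℕ} (A : Matrix (Fin n) (Fin n) ℝ) (α : ℝ) :
    Matrix (Fin n) (Fin n) ℝ :=
  Matrix.of fun i j => (A i j) ^ α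

open Real

private lemma quad_nonneg {a b c : ℝ} (ha : 0 ≤ a) (hc : 0 ≤ c) (hb : b^2 ≤ a*c)
    (x y : ℝ) : 0 ≤ a*x^2 + 2*b*x*y + c*y^2 := by
  rcases eq_or_lt_of_le ha with h|h
  · have hb0 : b = 0 := by nlinarith
    subst hb0
    have := mul_nonneg hc (sq_nonneg y)
    nlinarith [mul_nonneg (le_of_eq h) (sq_nonneg x)]
  · nlinarith [sq_nonneg (a*x + b*y), mul_nonneg (sub_nonneg.2 hb) (sq_nonneg y)]

private lemma minor {a b d : ℝ} (hq : ∀ s t : ℝ, 0 ≤ a*s^2 + 2*d*s*t + b*t^2) :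
    d^2 ≤ a*b := by
  have ha : 0 ≤ a := by have := hq 1 0; nlinarith
  have hb : 0 ≤ b := by have := hq 0 1; nlinarith
  rcases eq_or_lt_of_le ha with h|h
  · have h2 := hq (b+1) (-d)
    nlinarith
  · have h3 := hq (-d) a
    nlinarith

private lemma cross_ineq {a b d e f : ℝ} (hd : d^2 ≤ a*b) (he : 0 ≤ e) (hf : 0 ≤ f)
    (ha : 0 ≤ a) (hb : 0 ≤ b) : 2*(e*f*d) ≤ e^2*b + f^2*a := by
  rcases eq_or_lt_of_le ha with h|h
  · have hd0 : d = 0 := by nlinarith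
    subst hd0
    nlinarith [mul_nonneg (mul_nonneg he he) hb, mul_nonneg (mul_nonneg hf hf) ha]
  · nlinarith [sq_nonneg (e*d - f*a), mul_le_mul_of_nonneg_left hd (sq_nonneg e)]

private lemma sq_rpow {x : ℝ} (hx : 0 ≤ x) (β : ℝ) : (x^β)^2 = (x^2)^β := by
  rw [← Real.rpow_natCast (x^β) 2, ← Real.rpow_mul hx, mul_comm,
    Real.rpow_mul hx, Real.rpow_natCast]

private lemma cont_aux {β : ℝ} (hβ : 0 ≤ β) (α r s : ℝ) :
    Continuous fun t : ℝ => α * (r + t*s)^(β) * s := by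
  apply Continuous.mul _ continuous_const
  apply Continuous.mul continuous_const
  exact (Real.continuous_rpow_const hβ).comp (continuous_const.add (continuous_id.mul continuous_const))

private lemma rpow_diff_integral (a r : ℝ) {α : ℝ} (hα : 1 ≤ α) :
    a ^ α - r ^ α = ∫ t in (0:ℝ)..1, α * (r + t*(a - r)) ^ (α - 1) * (a - r) := by
  have hd : ∀ t ∈ Set.uIcc (0:ℝ) 1,
      HasDerivAt (fun t : ℝ => (r + t*(a - r)) ^ α)
        (α * (r + t*(a - r)) ^ (α - 1) * (a - r)) t := by
    intro t _
    have h1 : HasDerivAt (fun t : ℝ => r + t*(a - r)) (a - r) t := by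
      simpa using ((hasDerivAt_id t).mul_const (a - r)).const_add r
    have h2 := (Real.hasDerivAt_rpow_const (x := r + t*(a-r)) (p := α) (Or.inr hα)).comp t h1
    simpa [mul_assoc, Function.comp_def] using h2
  have hint : IntervalIntegrable (fun t : ℝ => α * (r + t*(a - r)) ^ (α - 1) * (a - r))
      MeasureTheory.volume 0 1 := (cont_aux (by linarith) α r (a - r)).intervalIntegrable _ _
  have := intervalIntegral.integral_eq_sub_of_hasDerivAt hd hint
  rw [this]
  norm_num

private lemma FH3_pointwise {a b c d e f t α : ℝ} (ha : 0 ≤ a) (hb : 0 ≤ b) (hd : 0 ≤ d)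
    (he : 0 ≤ e) (hf : 0 ≤ f)
    (h : 0 < c) (ht0 : 0 ≤ t) (ht1 : t ≤ 1) (hα : 1 ≤ α)
    (hu : 0 ≤ a - e^2/c) (hw : 0 ≤ b - f^2/c)
    (hv2 : (d - e*f/c)^2 ≤ (a - e^2/c)*(b - f^2/c))
    (hd2 : d^2 ≤ a*b) (hcross : 2*(e*f*d) ≤ e^2*b + f^2*a) (x0 x1 : ℝ) :
    0 ≤ x0^2*(α*(e^2/c + t*(a - e^2/c))^(α-1)*(a - e^2/c))
      + (2*(x0*x1))*(α*(e*f/c + t*(d - e*f/c))^(α-1)*(d - e*f/c))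
      + x1^2*(α*(f^2/c + t*(b - f^2/c))^(α-1)*(b - f^2/c)) := by
  have hα0 : (0:ℝ) ≤ α := by linarith
  have hβ : (0:ℝ) ≤ α - 1 := by linarith
  set m0 := e^2/c + t*(a - e^2/c) with hm0def
  set m1 := e*f/c + t*(d - e*f/c) with hm1def
  set m2 := f^2/c + t*(b - f^2/c) with hm2def
  have hm0 : 0 ≤ m0 := add_nonneg (by positivity) (mul_nonneg ht0 hu)
  have hm2 : 0 ≤ m2 := add_nonneg (by positivity) (mul_nonneg ht0 hw)
  have hm1 : 0 ≤ m1 := by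
    have e1 : m1 = (1-t)*(e*f/c) + t*d := by rw [hm1def]; ring
    rw [e1]
    have h2 : 0 ≤ e*f/c := by positivity
    exact add_nonneg (mul_nonneg (by linarith) h2) (mul_nonneg ht0 hd)
  have key2 : (e*f + t*(d*c - e*f))^2 ≤ (e^2 + t*(a*c - e^2))*(f^2 + t*(b*c - f^2)) := by
    nlinarith [mul_nonneg (mul_nonneg ht0 (sub_nonneg.2 ht1))
        (sub_nonneg.2 (mul_le_mul_of_nonneg_right hcross (le_of_lt h))),
      mul_nonneg (mul_nonneg ht0 ht0)
        (sub_nonneg.2 (mul_le_mul_of_nonneg_right hd2 (sq_nonneg c)))]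
  have hmm : m1^2 ≤ m0*m2 := by
    have e0 : m0 = (e^2 + t*(a*c - e^2))/c := by rw [hm0def]; field_simp
    have e1 : m1 = (e*f + t*(d*c - e*f))/c := by rw [hm1def]; field_simp
    have e2 : m2 = (f^2 + t*(b*c - f^2))/c := by rw [hm2def]; field_simp
    rw [e0, e1, e2, div_pow, div_mul_div_comm, show c*c = c^2 by ring]
    gcongr
  -- now apply quad_nonneg with the rpow coefficients
  have hs : (m1^(α-1))^2 ≤ m0^(α-1) * m2^(α-1) := by
    rw [sq_rpow hm1, ← Real.mul_rpow hm0 hm2]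
    exact Real.rpow_le_rpow (sq_nonneg m1) hmm hβ
  have hA' : 0 ≤ α*m0^(α-1)*(a - e^2/c) :=
    mul_nonneg (mul_nonneg hα0 (Real.rpow_nonneg hm0 _)) hu
  have hC' : 0 ≤ α*m2^(α-1)*(b - f^2/c) :=
    mul_nonneg (mul_nonneg hα0 (Real.rpow_nonneg hm2 _)) hw
  have hB' : (α*m1^(α-1)*(d - e*f/c))^2 ≤ (α*m0^(α-1)*(a - e^2/c))*(α*m2^(α-1)*(b - f^2/c)) := by
    have H := mul_le_mul hs hv2 (sq_nonneg (d - e*f/c))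
      (mul_nonneg (Real.rpow_nonneg hm0 _) (Real.rpow_nonneg hm2 _))
    calc (α*m1^(α-1)*(d - e*f/c))^2 = α^2*((m1^(α-1))^2*(d - e*f/c)^2) := by ring
      _ ≤ α^2*((m0^(α-1)*m2^(α-1))*((a - e^2/c)*(b - f^2/c))) :=
          mul_le_mul_of_nonneg_left H (sq_nonneg α)
      _ = (α*m0^(α-1)*(a - e^2/c))*(α*m2^(α-1)*(b - f^2/c)) := by ring
  linarith [quad_nonneg hA' hC' hB' x0 x1]

private lemma rank1_identity (E F C A B D x0 x1 x2 : ℝ) (hC : C ≠ 0) :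
    A*x0^2 + B*x1^2 + C*x2^2 + 2*D*x0*x1 + 2*E*x0*x2 + 2*F*x1*x2
    = (E*x0 + F*x1 + C*x2)^2/C
      + (x0^2*(A - E^2/C) + (2*(x0*x1))*(D - E*F/C) + x1^2*(B - F^2/C)) := by
  field_simp
  ring

set_option maxHeartbeats 2000000 in
private lemma FH3core {a b c d e f : ℝ} (ha : 0 ≤ a) (hb : 0 ≤ b) (hc : 0 ≤ c)
    (hd : 0 ≤ d) (he : 0 ≤ e) (hf : 0 ≤ f)
    (hq : ∀ x0 x1 x2 : ℝ, 0 ≤ a*x0^2 + b*x1^2 + c*x2^2 + 2*d*x0*x1 + 2*e*x0*x2 + 2*f*x1*x2)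
    (hdet : 0 ≤ a*b*c + 2*(d*e*f) - a*f^2 - b*e^2 - c*d^2)
    {α : ℝ} (hα : 1 ≤ α) (x0 x1 x2 : ℝ) :
    0 ≤ a^α*x0^2 + b^α*x1^2 + c^α*x2^2 + 2*d^α*x0*x1 + 2*e^α*x0*x2 + 2*f^α*x1*x2 := by
  have hα0 : (0:ℝ) < α := by linarith
  have hβ : (0:ℝ) ≤ α - 1 := by linarith
  have hd2 : d^2 ≤ a*b := minor (fun s t => by nlinarith [hq s t 0])
  have he2 : e^2 ≤ a*c := minor (fun s t => by nlinarith [hq s 0 t])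
  have hf2 : f^2 ≤ b*c := minor (fun s t => by nlinarith [hq 0 s t])
  rcases eq_or_lt_of_le hc with h|h
  · have he0 : e = 0 := by nlinarith
    have hf0 : f = 0 := by nlinarith
    have hc0 : c = 0 := h.symm
    subst he0; subst hf0; subst hc0
    rw [Real.zero_rpow (ne_of_gt hα0)]
    have hdp : (d^α)^2 ≤ a^α * b^α := by
      rw [sq_rpow hd α, ← Real.mul_rpow ha hb]
      exact Real.rpow_le_rpow (sq_nonneg d) hd2 (le_of_lt hα0)
    nlinarith [quad_nonneg (Real.rpow_nonneg ha α) (Real.rpow_nonneg hb α) hdp x0 x1]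
  · have hu : 0 ≤ a - e^2/c := by
      rw [sub_nonneg, div_le_iff₀ h]; nlinarith
    have hw : 0 ≤ b - f^2/c := by
      rw [sub_nonneg, div_le_iff₀ h]; nlinarith
    have hkey : (d*c - e*f)^2 ≤ (a*c - e^2)*(b*c - f^2) := by
      nlinarith [mul_nonneg (le_of_lt h) hdet]
    have hv2 : (d - e*f/c)^2 ≤ (a - e^2/c)*(b - f^2/c) := by
      have expand : (a - e^2/c)*(b - f^2/c) - (d - e*f/c)^2
          = ((a*c - e^2)*(b*c - f^2) - (d*c - e*f)^2)/c^2 := by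
        field_simp
      nlinarith [div_nonneg (sub_nonneg.2 hkey) (sq_nonneg c), expand]
    have hcross : 2*(e*f*d) ≤ e^2*b + f^2*a := cross_ineq hd2 he hf ha hb
    have hI0 := rpow_diff_integral a (e^2/c) hα
    have hI1 := rpow_diff_integral d (e*f/c) hα
    have hI2 := rpow_diff_integral b (f^2/c) hα
    have int0 : IntervalIntegrable
        (fun t : ℝ => x0^2*(α*(e^2/c + t*(a - e^2/c))^(α-1)*(a - e^2/c)))
        MeasureTheory.volume 0 1 := (continuous_const.mul (cont_aux hβ α _ _)).intervalIntegrable _ _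
    have int1 : IntervalIntegrable
        (fun t : ℝ => (2*(x0*x1))*(α*(e*f/c + t*(d - e*f/c))^(α-1)*(d - e*f/c)))
        MeasureTheory.volume 0 1 := (continuous_const.mul (cont_aux hβ α _ _)).intervalIntegrable _ _
    have int2 : IntervalIntegrable
        (fun t : ℝ => x1^2*(α*(f^2/c + t*(b - f^2/c))^(α-1)*(b - f^2/c)))
        MeasureTheory.volume 0 1 := (continuous_const.mul (cont_aux hβ α _ _)).intervalIntegrable _ _
    have hbr : x0^2*(a^α - (e^2/c)^α) + (2*(x0*x1))*(d^α - (e*f/c)^α)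
          + x1^2*(b^α - (f^2/c)^α)
        = ∫ t in (0:ℝ)..1,
            (x0^2*(α*(e^2/c + t*(a - e^2/c))^(α-1)*(a - e^2/c))
            + (2*(x0*x1))*(α*(e*f/c + t*(d - e*f/c))^(α-1)*(d - e*f/c))
            + x1^2*(α*(f^2/c + t*(b - f^2/c))^(α-1)*(b - f^2/c))) := by
      rw [hI0, hI1, hI2, ← intervalIntegral.integral_const_mul,
        ← intervalIntegral.integral_const_mul, ← intervalIntegral.integral_const_mul,
        ← intervalIntegral.integral_add int0 int1,
        ← intervalIntegral.integral_add (int0.add int1) int2]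
    have hTnn : 0 ≤ x0^2*(a^α - (e^2/c)^α) + (2*(x0*x1))*(d^α - (e*f/c)^α)
          + x1^2*(b^α - (f^2/c)^α) := by
      rw [hbr]
      apply intervalIntegral.integral_nonneg (by norm_num)
      intro t ht
      exact FH3_pointwise ha hb hd he hf h ht.1 ht.2 hα hu hw hv2 hd2 hcross x0 x1
    have hepow : (e^2/c)^α = (e^α)^2/c^α := by
      rw [Real.div_rpow (sq_nonneg e) (le_of_lt h), sq_rpow he]
    have hfpow : (f^2/c)^α = (f^α)^2/c^α := by
      rw [Real.div_rpow (sq_nonneg f) (le_of_lt h), sq_rpow hf]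
    have hdpow : (e*f/c)^α = e^α*f^α/c^α := by
      rw [Real.div_rpow (mul_nonneg he hf) (le_of_lt h), Real.mul_rpow he hf]
    have hcα : 0 < c^α := Real.rpow_pos_of_pos h α
    have main : a^α*x0^2 + b^α*x1^2 + c^α*x2^2 + 2*d^α*x0*x1 + 2*e^α*x0*x2 + 2*f^α*x1*x2
        = (e^α*x0 + f^α*x1 + c^α*x2)^2/c^α
          + (x0^2*(a^α - (e^2/c)^α) + (2*(x0*x1))*(d^α - (e*f/c)^α)
            + x1^2*(b^α - (f^2/c)^α)) := by
      rw [hepow, hdpow, hfpow]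
      exact rank1_identity (e^α) (f^α) (c^α) (a^α) (b^α) (d^α) x0 x1 x2 (ne_of_gt hcα)
    rw [main]
    have hsq : 0 ≤ (e^α*x0 + f^α*x1 + c^α*x2)^2/c^α := by positivity
    linarith

private lemma psd_form {M : Matrix (Fin 3) (Fin 3) ℝ} (hM : M.PosSemidef) (x : Fin 3 → ℝ) :
    0 ≤ x 0 * (M 0 0 * x 0 + M 0 1 * x 1 + M 0 2 * x 2)
      + x 1 * (M 1 0 * x 0 + M 1 1 * x 1 + M 1 2 * x 2)
      + x 2 * (M 2 0 * x 0 + M 2 1 * x 1 + M 2 2 * x 2) := by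
  have h := hM.dotProduct_mulVec_nonneg x
  simpa [dotProduct, Matrix.mulVec, Fin.sum_univ_three] using h

private lemma sym_apply {M : Matrix (Fin 3) (Fin 3) ℝ} (hM : M.IsHermitian)
    (i j : Fin 3) : M i j = M j i := by
  have h := congrFun (congrFun hM j) i
  simpa [Matrix.conjTranspose_apply] using h

private lemma hp_herm {n : ℕ} {M : Matrix (Fin n) (Fin n) ℝ} (hM : M.IsHermitian) (α : ℝ) :
    (hadamardPower M α).IsHermitian := by
  ext i j
  simp only [Matrix.conjTranspose_apply, hadamardPower, Matrix.of_apply, star_trivial]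
  rw [show M j i = M i j from by
    have h := congrFun (congrFun hM i) j
    simpa [Matrix.conjTranspose_apply] using h]

private lemma det3_nonneg {M : Matrix (Fin 3) (Fin 3) ℝ} (hM : M.PosSemidef) :
    0 ≤ M.det := by
  rw [hM.1.det_eq_prod_eigenvalues]
  exact Finset.prod_nonneg fun i _ => RCLike.ofReal_nonneg.2 (hM.eigenvalues_nonneg i)

private lemma FH3 (A : Matrix (Fin 3) (Fin 3) ℝ) (hA : A.PosSemidef) (hnn : ∀ i j, 0 ≤ A i j)
    {α : ℝ} (hα : 1 ≤ α) : (hadamardPower A α).PosSemidef := by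
  have hs10 : A 1 0 = A 0 1 := sym_apply hA.1 1 0
  have hs20 : A 2 0 = A 0 2 := sym_apply hA.1 2 0
  have hs21 : A 2 1 = A 1 2 := sym_apply hA.1 2 1
  have hq : ∀ x0 x1 x2 : ℝ, 0 ≤ A 0 0*x0^2 + A 1 1*x1^2 + A 2 2*x2^2
      + 2*(A 0 1)*x0*x1 + 2*(A 0 2)*x0*x2 + 2*(A 1 2)*x1*x2 := by
    intro x0 x1 x2
    have h := psd_form hA ![x0, x1, x2]
    simp only [Matrix.cons_val_zero, Matrix.cons_val_one, Matrix.head_cons,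
      Matrix.cons_val_two, Matrix.tail_cons] at h
    rw [hs10, hs20, hs21] at h
    nlinarith [h]
  have hdet : 0 ≤ A 0 0*(A 1 1)*(A 2 2) + 2*((A 0 1)*(A 0 2)*(A 1 2))
      - A 0 0*(A 1 2)^2 - A 1 1*(A 0 2)^2 - A 2 2*(A 0 1)^2 := by
    have h := det3_nonneg hA
    rw [Matrix.det_fin_three] at h
    rw [hs10, hs20, hs21] at h
    nlinarith [h]
  refine Matrix.PosSemidef.of_dotProduct_mulVec_nonneg (hp_herm hA.1 α) fun x => ?_
  have key := FH3core (hnn 0 0) (hnn 1 1) (hnn 2 2) (hnn 0 1) (hnn 0 2) (hnn 1 2)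
    hq hdet hα (x 0) (x 1) (x 2)
  simp only [dotProduct, Matrix.mulVec, hadamardPower, Matrix.of_apply,
    Fin.sum_univ_three, star_trivial, Pi.star_apply]
  rw [hs10, hs20, hs21]
  nlinarith [key]

/-- For a `3 × 3` p.s.d. matrix `A` with non-negative entries, there is `ρ ∈ [0, 1]`
such that for `α ≥ 0`, `A^{∘α}` is p.s.d. iff `α = 0` or `α ≥ ρ`; that is,
`S_A = {0} ∪ [ρ, ∞)`. -/
theorem SA_eq_zero_union_Ici_of_three_by_three (A : Matrix (Fin 3) (Fin 3) ℝ)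
    (hA : A.PosSemidef) (hnn : ∀ i j, 0 ≤ A i j) :
    ∃ ρ ∈ Set.Icc (0 : ℝ) 1, ∀ α : ℝ, 0 ≤ α →
      ((hadamardPower A α).PosSemidef ↔ α = 0 ∨ ρ ≤ α) := by
  have hp1 : hadamardPower A 1 = A := by
    ext i j; simp [hadamardPower]
  have hp0 : (hadamardPower A 0).PosSemidef := by
    refine Matrix.PosSemidef.of_dotProduct_mulVec_nonneg (hp_herm hA.1 0) fun x => ?_
    have : ∀ i j, hadamardPower A 0 i j = 1 := by intro i j; simp [hadamardPower]
    simp only [dotProduct, Matrix.mulVec, Fin.sum_univ_three, this,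
      star_trivial, Pi.star_apply, one_mul]
    nlinarith [sq_nonneg (x 0 + x 1 + x 2)]
  have hcomp : ∀ (β γ : ℝ), hadamardPower (hadamardPower A β) γ = hadamardPower A (β*γ) := by
    intro β γ; ext i j
    simp only [hadamardPower, Matrix.of_apply]
    exact (Real.rpow_mul (hnn i j) β γ).symm
  have hpnn : ∀ (β : ℝ) i j, 0 ≤ hadamardPower A β i j := fun β i j =>
    Real.rpow_nonneg (hnn i j) β
  set T : Set ℝ := {β : ℝ | 0 < β ∧ (hadamardPower A β).PosSemidef} with hTdef
  have hT1 : (1:ℝ) ∈ T := ⟨one_pos, by rw [hp1]; exact hA⟩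
  have hTne : T.Nonempty := ⟨1, hT1⟩
  have hTbdd : BddBelow T := ⟨0, fun β hβ => hβ.1.le⟩
  have hup : ∀ β ∈ T, ∀ γ, β ≤ γ → (hadamardPower A γ).PosSemidef := by
    intro β hβ γ hγ
    have h1 : 1 ≤ γ/β := (one_le_div hβ.1).2 hγ
    have := FH3 (hadamardPower A β) hβ.2 (hpnn β) h1
    rwa [hcomp, mul_div_cancel₀ _ (ne_of_gt hβ.1)] at this
  set ρ := sInf T with hρdef
  have hρ0 : 0 ≤ ρ := le_csInf hTne fun β hβ => hβ.1.le
  have hρ1 : ρ ≤ 1 := csInf_le hTbdd hT1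
  -- closedness: if 0 < ρ then A^∘ρ is PSD
  have hclosed : 0 < ρ → (hadamardPower A ρ).PosSemidef := by
    intro hρpos
    refine Matrix.PosSemidef.of_dotProduct_mulVec_nonneg (hp_herm hA.1 ρ) fun x => ?_
    by_contra hneg
    push_neg at hneg
    set g : ℝ → ℝ := fun γ =>
      x 0 * ((A 0 0)^γ * x 0 + (A 0 1)^γ * x 1 + (A 0 2)^γ * x 2)
      + x 1 * ((A 1 0)^γ * x 0 + (A 1 1)^γ * x 1 + (A 1 2)^γ * x 2)
      + x 2 * ((A 2 0)^γ * x 0 + (A 2 1)^γ * x 1 + (A 2 2)^γ * x 2) with hgdef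
    have hgval : ∀ γ, g γ = dotProduct (star x) ((hadamardPower A γ).mulVec x) := by
      intro γ
      simp [hgdef, dotProduct, Matrix.mulVec, Fin.sum_univ_three, hadamardPower,
        mul_comm, mul_left_comm, mul_assoc]
    have hcont : ContinuousAt g ρ := by
      have hrp : ∀ i j, ContinuousAt (fun γ : ℝ => (A i j)^γ) ρ := by
        intro i j
        have : ContinuousAt (fun p : ℝ × ℝ => p.1 ^ p.2) (A i j, ρ) := by
          apply Real.continuousAt_rpow
          rcases eq_or_lt_of_le (hnn i j) with h|h
          · exact Or.inr hρpos
          · exact Or.inl (ne_of_gt h)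
        exact this.comp ((continuous_const.prodMk continuous_id).continuousAt)
      rw [hgdef]
      fun_prop
    have hg0 : g ρ < 0 := by rw [hgval]; exact hneg
    have hnhd : g ⁻¹' (Set.Iio 0) ∈ nhds ρ := hcont.preimage_mem_nhds (Iio_mem_nhds hg0)
    obtain ⟨ε, hε, hball⟩ := Metric.mem_nhds_iff.1 hnhd
    obtain ⟨β, hβT, hβlt⟩ := exists_lt_of_csInf_lt hTne (show sInf T < ρ + ε by
      rw [← hρdef]; linarith)
    have hβge : ρ ≤ β := csInf_le hTbdd hβT
    have hβball : β ∈ Metric.ball ρ ε := by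
      rw [Metric.mem_ball, Real.dist_eq, abs_lt]
      constructor <;> [linarith; linarith [hβlt]]
    have hgβ : g β < 0 := hball hβball
    have : 0 ≤ g β := by rw [hgval]; exact hβT.2.dotProduct_mulVec_nonneg x
    linarith
  refine ⟨ρ, ⟨hρ0, hρ1⟩, fun α hα => ⟨fun hPSD => ?_, fun h => ?_⟩⟩
  · by_cases h0 : α = 0
    · exact Or.inl h0
    · exact Or.inr (csInf_le hTbdd ⟨lt_of_le_of_ne hα (Ne.symm h0), hPSD⟩)
  · rcases h with h0 | hge
    · subst h0; exact hp0
    · by_cases h0 : α = 0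
      · subst h0; exact hp0
      · have hαpos : 0 < α := lt_of_le_of_ne hα (Ne.symm h0)
        rcases eq_or_lt_of_le hge with heq | hlt
        · rw [← heq]
          exact hclosed (heq ▸ hαpos)
        · obtain ⟨β, hβT, hβlt⟩ := exists_lt_of_csInf_lt hTne hlt
          exact hup β hβT α hβlt.le
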